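/- For all integers n ≥ 0 and k ≥ 1, the determinant of the n×n matrix over ℚ with entries ((i+k+1)/(j+k))·binom(j+k, i-j+1) for 0 ≤ j ≤ i+1 and 0 for j > i+1, 0 ≤ i, j ≤ n-1, equals binom(2n+k-1, n). -/

import Mathlib

open Finset Polynomial

noncomputable def cbq (i : ℕ) : ℚ := (Nat.centralBinom i : ℚ)

lemma reflW (n : ℕ) :
    2 * ∑ i ∈ range (n+1), (i:ℚ) * cbq i * cbq (n-i)
      = (n:ℚ) * ∑ i ∈ range (n+1), cbq i * cbq (n-i) := by
  have h := Finset.sum_range_reflect (fun i => (i:ℚ) * cbq i * cbq (n-i)) (n+1)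
  have h2 : ∑ j ∈ range (n+1), ((n + 1 - 1 - j : ℕ):ℚ) * cbq (n+1-1-j) * cbq (n-(n+1-1-j))
      = ∑ j ∈ range (n+1), ((n - j : ℕ):ℚ) * cbq (n-j) * cbq j := by
    apply Finset.sum_congr rfl
    intro j hj
    have hj' : j ≤ n := by simpa [Nat.lt_succ_iff] using hj
    have e1 : n + 1 - 1 - j = n - j := by omega
    have e2 : n - (n - j) = j := by omega
    rw [e1, e2]
  rw [h2] at h
  have : 2 * ∑ i ∈ range (n+1), (i:ℚ) * cbq i * cbq (n-i)
      = ∑ i ∈ range (n+1), ((i:ℚ) + ((n - i : ℕ):ℚ)) * cbq i * cbq (n-i) := by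
    rw [two_mul]
    nth_rewrite 1 [← h]
    rw [← Finset.sum_add_distrib]
    apply Finset.sum_congr rfl
    intro i hi
    ring
  rw [this]
  rw [Finset.mul_sum]
  apply Finset.sum_congr rfl
  intro i hi
  have hi' : i ≤ n := by simpa [Nat.lt_succ_iff] using hi
  rw [Nat.cast_sub hi']; ring

lemma conv4 : ∀ m : ℕ, ∑ i ∈ range (m+1), cbq i * cbq (m-i) = 4^m := by
  intro m
  induction m with
  | zero => simp [cbq, Nat.centralBinom]
  | succ m ih =>
    -- W = sum i * cbq i * cbq (m+1-i)
    set W : ℚ := ∑ i ∈ range (m+2), (i:ℚ) * cbq i * cbq (m+1-i) with hW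
    have h2W : 2 * W = ((m+1 : ℕ):ℚ) * ∑ i ∈ range (m+2), cbq i * cbq (m+1-i) := by
      have := reflW (m+1)
      simpa using this
    have hWval : W = 2 * ((m:ℚ)+1) * 4^m := by
      have hpeel : W = ∑ i ∈ range (m+1),
          ((i:ℕ)+1 : ℚ) * cbq (i+1) * cbq (m-i) := by
        rw [hW, Finset.sum_range_succ']
        simp
      have hstep : ∀ i : ℕ, ((i:ℕ)+1 : ℚ) * cbq (i+1) = 2*(2*(i:ℚ)+1) * cbq i := by
        intro i
        have := Nat.succ_mul_centralBinom_succ i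
        have : ((i+1) * Nat.centralBinom (i+1) : ℕ) = (2 * (2*i+1) * Nat.centralBinom i : ℕ) := this
        have q := congrArg (fun x : ℕ => (x : ℚ)) this
        push_cast at q
        simp [cbq]
        push_cast
        linarith [q]
      have : W = ∑ i ∈ range (m+1), 2*(2*(i:ℚ)+1) * cbq i * cbq (m-i) := by
        rw [hpeel]
        apply Finset.sum_congr rfl
        intro i _
        rw [hstep i]
      rw [this]
      have hsplit : ∑ i ∈ range (m+1), 2*(2*(i:ℚ)+1) * cbq i * cbq (m-i)
          = 4 * (∑ i ∈ range (m+1), (i:ℚ) * cbq i * cbq (m-i))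
            + 2 * ∑ i ∈ range (m+1), cbq i * cbq (m-i) := by
        rw [Finset.mul_sum, Finset.mul_sum, ← Finset.sum_add_distrib]
        apply Finset.sum_congr rfl
        intro i _
        ring
      rw [hsplit]
      have hrefl := reflW m
      have : 4 * (∑ i ∈ range (m+1), (i:ℚ) * cbq i * cbq (m-i))
          = 2 * ((m:ℚ) * ∑ i ∈ range (m+1), cbq i * cbq (m-i)) := by
        rw [← hrefl]; ring
      rw [this, ih]
      ring
    have hne : ((m+1 : ℕ):ℚ) ≠ 0 := by positivity
    have : ((m+1:ℕ):ℚ) * ∑ i ∈ range (m+2), cbq i * cbq (m+1-i) = ((m+1:ℕ):ℚ) * 4^(m+1) := by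
      rw [← h2W, hWval]
      push_cast
      ring
    have := mul_left_cancel₀ hne this
    simpa using this


noncomputable def ch (a b : ℕ) : ℚ := (Nat.choose a b : ℚ)

lemma ch_zero (a : ℕ) : ch a 0 = 1 := by simp [ch]

lemma ch_succ_succ (a b : ℕ) : ch (a+1) (b+1) = ch a b + ch a (b+1) := by
  simp [ch, Nat.choose_succ_succ]

lemma gsum : ∀ N : ℕ, ∑ m ∈ range (N+1), (-4:ℚ)^m * ch m (N-m) = ((N:ℚ)+1) * (-2)^N := by
  intro N
  induction N using Nat.strong_induction_on with
  | _ N ih =>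
    match N with
    | 0 => simp [ch]
    | 1 =>
      rw [Finset.sum_range_succ, Finset.sum_range_succ, Finset.sum_range_zero]
      norm_num [ch]
    | (N+2) =>
      have ih1 := ih (N+1) (by omega)
      have ih0 := ih N (by omega)
      rw [Finset.sum_range_succ']
      have f0 : (-4:ℚ)^0 * ch 0 (N+2-0) = 0 := by
        simp [ch, Nat.choose_eq_zero_of_lt]
      rw [f0, add_zero]
      -- now goal: ∑ m ∈ range (N+2), (-4)^(m+1) * ch (m+1) (N+2-(m+1)) = _
      have e1 : ∀ m, N+2-(m+1) = N+1-m := by intro m; omega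
      have hpeel : ∑ m ∈ range (N+2), (-4:ℚ)^(m+1) * ch (m+1) (N+2-(m+1))
          = (∑ m ∈ range (N+1), (-4:ℚ)^(m+1) * ch (m+1) (N+1-m))
            + (-4:ℚ)^(N+2) * ch (N+2) 0 := by
        rw [Finset.sum_range_succ]
        congr 1
        · apply Finset.sum_congr rfl; intro m _; rw [e1]
        · rw [e1]; norm_num
      rw [hpeel]
      have hsplit : ∑ m ∈ range (N+1), (-4:ℚ)^(m+1) * ch (m+1) (N+1-m)
          = (∑ m ∈ range (N+1), (-4:ℚ)^(m+1) * ch m (N-m))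
            + ∑ m ∈ range (N+1), (-4:ℚ)^(m+1) * ch m (N+1-m) := by
        rw [← Finset.sum_add_distrib]
        apply Finset.sum_congr rfl
        intro m hm
        have hm' : m ≤ N := by simpa [Nat.lt_succ_iff] using hm
        have e2 : N+1-m = (N-m)+1 := by omega
        rw [e2, ch_succ_succ]
        ring
      rw [hsplit]
      have hA : ∑ m ∈ range (N+1), (-4:ℚ)^(m+1) * ch m (N-m)
          = -4 * (((N:ℚ)+1) * (-2)^N) := by
        rw [← ih0, Finset.mul_sum]
        apply Finset.sum_congr rfl
        intro m _
        ring
      have hB : (∑ m ∈ range (N+1), (-4:ℚ)^(m+1) * ch m (N+1-m))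
            + (-4:ℚ)^(N+2) * ch (N+2) 0
          = -4 * (∑ m ∈ range (N+1+1), (-4:ℚ)^m * ch m (N+1-m)) := by
        rw [Finset.mul_sum]
        nth_rewrite 2 [Finset.sum_range_succ]
        have e3 : N+1-(N+1) = 0 := by omega
        rw [e3, ch_zero, ch_zero]
        congr 1
        · apply Finset.sum_congr rfl; intro m _; ring
        · ring
      rw [add_assoc, hB, ih1, hA]
      push_cast
      ring


lemma ch_cb (i : ℕ) : ch (2*i) i = (Nat.centralBinom i : ℚ) := by
  simp [ch, Nat.centralBinom]

lemma conv4' : ∀ m : ℕ, ∑ i ∈ range (m+1), (Nat.centralBinom i : ℚ) * (Nat.centralBinom (m-i) : ℚ) = 4^m := by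
  intro m
  simpa [cbq] using conv4 m

lemma gsum' : ∀ N : ℕ, ∑ m ∈ range (N+1), (-4:ℚ)^m * ch m (N-m) = ((N:ℚ)+1) * (-2)^N := gsum

noncomputable def Ppoly (K : ℕ) : Polynomial ℚ :=
  ∑ j ∈ range (K+1), Polynomial.C ((-1:ℚ)^j * ch (2*j) j) * (Polynomial.X * (1+Polynomial.X))^j

noncomputable def sS (M : ℕ) : ℚ := ∑ j ∈ range (M+1), (-1:ℚ)^j * ch (2*j) j * ch j (M-j)

lemma coeff_term (j a : ℕ) :
    ((Polynomial.X * (1+Polynomial.X) : Polynomial ℚ)^j).coeff a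
      = if j ≤ a then ch j (a-j) else 0 := by
  rw [mul_pow, mul_comm]
  rw [Polynomial.coeff_mul_X_pow']
  by_cases h : j ≤ a
  · simp [h, Polynomial.coeff_one_add_X_pow, ch]
  · simp [h]

lemma coeffP (K a : ℕ) (ha : a ≤ K) : (Ppoly K).coeff a = sS a := by
  rw [Ppoly, Polynomial.finset_sum_coeff]
  have h1 : ∀ j, (Polynomial.C ((-1:ℚ)^j * ch (2*j) j) * (Polynomial.X * (1+Polynomial.X))^j).coeff a
      = ((-1:ℚ)^j * ch (2*j) j) * (if j ≤ a then ch j (a-j) else 0) := by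
    intro j
    rw [Polynomial.coeff_C_mul, coeff_term]
  simp only [h1]
  rw [sS]
  rw [← Finset.sum_subset (Finset.range_subset_range.mpr (by omega : a+1 ≤ K+1))]
  · apply Finset.sum_congr rfl
    intro j hj
    have : j ≤ a := by simpa [Nat.lt_succ_iff] using hj
    simp [this]
  · intro x _ hx
    have : ¬ x ≤ a := by simp at hx; omega
    simp [this]

lemma sq_coeff (K : ℕ) :
    ((Ppoly K) * (Ppoly K)).coeff K = ∑ m ∈ range (K+1), (-4:ℚ)^m * ch m (K-m) := by
  rw [Ppoly, Finset.sum_mul_sum]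
  rw [Polynomial.finset_sum_coeff]
  have h1 : ∀ i ∈ range (K+1),
      (∑ j ∈ range (K+1), (Polynomial.C ((-1:ℚ)^i * ch (2*i) i) * (Polynomial.X * (1+Polynomial.X))^i
        * (Polynomial.C ((-1:ℚ)^j * ch (2*j) j) * (Polynomial.X * (1+Polynomial.X))^j))).coeff K
      = ∑ j ∈ range (K+1), ((-1:ℚ)^i * ch (2*i) i) * ((-1:ℚ)^j * ch (2*j) j)
          * (if i+j ≤ K then ch (i+j) (K-(i+j)) else 0) := by
    intro i _
    rw [Polynomial.finset_sum_coeff]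
    apply Finset.sum_congr rfl
    intro j _
    have : Polynomial.C ((-1:ℚ)^i * ch (2*i) i) * (Polynomial.X * (1+Polynomial.X))^i
        * (Polynomial.C ((-1:ℚ)^j * ch (2*j) j) * (Polynomial.X * (1+Polynomial.X))^j)
        = Polynomial.C (((-1:ℚ)^i * ch (2*i) i) * ((-1:ℚ)^j * ch (2*j) j))
          * (Polynomial.X * (1+Polynomial.X))^(i+j) := by
      simp only [pow_add, Polynomial.C_mul]
      ring
    rw [this, Polynomial.coeff_C_mul, coeff_term]
  rw [Finset.sum_congr rfl h1]
  -- now pure sum rearrangement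
  have hRHS : ∑ m ∈ range (K+1), (-4:ℚ)^m * ch m (K-m)
      = ∑ m ∈ range (K+1), ∑ i ∈ range (m+1),
          ((-1:ℚ)^i * ch (2*i) i) * ((-1:ℚ)^(m-i) * ch (2*(m-i)) (m-i))
            * (if i+(m-i) ≤ K then ch (i+(m-i)) (K-(i+(m-i))) else 0) := by
    apply Finset.sum_congr rfl
    intro m hm
    have hm' : m ≤ K := by simpa [Nat.lt_succ_iff] using hm
    have h4 : (-4:ℚ)^m = (-1:ℚ)^m * 4^m := by
      rw [← neg_one_mul, mul_pow]
    rw [h4, ← conv4' m, Finset.mul_sum, Finset.sum_mul]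
    apply Finset.sum_congr rfl
    intro i hi
    have hi' : i ≤ m := by simpa [Nat.lt_succ_iff] using hi
    have e1 : i + (m-i) = m := by omega
    rw [e1]
    simp only [hm', if_true, ch_cb]
    have : (-1:ℚ)^m = (-1:ℚ)^i * (-1:ℚ)^(m-i) := by
      rw [← pow_add, e1]
    rw [this]
    ring
  rw [hRHS]
  -- convert double sums to sigma sums and biject
  rw [Finset.sum_sigma', Finset.sum_sigma']
  rw [← Finset.sum_filter_of_ne (p := fun x : (_ : ℕ) × ℕ => x.1 + x.2 ≤ K)
      (by
        intro x _ hfx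
        by_contra hc
        simp only [if_neg hc, mul_zero] at hfx
        exact hfx rfl)]
  refine Finset.sum_nbij' (i := fun x : (_ : ℕ) × ℕ => (⟨x.1 + x.2, x.1⟩ : (_ : ℕ) × ℕ))
      (j := fun x : (_ : ℕ) × ℕ => (⟨x.2, x.1 - x.2⟩ : (_ : ℕ) × ℕ)) ?_ ?_ ?_ ?_ ?_
  · intro x hx
    simp only [Finset.mem_filter, Finset.mem_sigma, Finset.mem_range] at hx ⊢
    omega
  · intro x hx
    simp only [Finset.mem_filter, Finset.mem_sigma, Finset.mem_range] at hx ⊢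
    omega
  · intro x hx
    simp only [Finset.mem_filter, Finset.mem_sigma, Finset.mem_range] at hx
    ext <;> simp <;> omega
  · intro x hx
    simp only [Finset.mem_filter, Finset.mem_sigma, Finset.mem_range] at hx
    ext <;> simp <;> omega
  · intro x hx
    simp only [Finset.mem_filter, Finset.mem_sigma, Finset.mem_range] at hx
    have e1 : x.1 + x.2 - x.1 = x.2 := by omega
    simp only [e1]

lemma sS_zero : sS 0 = 1 := by simp [sS, ch]

lemma coeff_sq_eq (K : ℕ) :
    ((Ppoly K) * (Ppoly K)).coeff K = ∑ a ∈ range (K+1), sS a * sS (K-a) := by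
  rw [Polynomial.coeff_mul, Finset.Nat.sum_antidiagonal_eq_sum_range_succ_mk]
  apply Finset.sum_congr rfl
  intro a ha
  have ha' : a ≤ K := by simpa [Nat.lt_succ_iff] using ha
  rw [coeffP K a ha', coeffP K (K-a) (by omega)]

lemma ssum : ∀ M : ℕ, sS M = (-2:ℚ)^M := by
  intro M
  induction M using Nat.strong_induction_on with
  | _ M ih =>
    match M with
    | 0 => simpa using sS_zero
    | (M+1) =>
      have key : ∑ a ∈ range (M+2), sS a * sS (M+1-a) = (((M+1:ℕ):ℚ)+1) * (-2)^(M+1) := by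
        rw [← coeff_sq_eq (M+1), sq_coeff (M+1), gsum' (M+1)]
      rw [Finset.sum_range_succ, Finset.sum_range_succ'] at key
      have hmid : ∑ a ∈ range M, sS (a+1) * sS (M+1-(a+1)) = (M:ℚ) * (-2)^(M+1) := by
        have : ∀ a ∈ range M, sS (a+1) * sS (M+1-(a+1)) = (-2:ℚ)^(M+1) := by
          intro a ha
          have ha' : a < M := by simpa using ha
          rw [ih (a+1) (by omega), ih (M+1-(a+1)) (by omega)]
          rw [← pow_add]
          congr 1
          omega
        rw [Finset.sum_congr rfl this, Finset.sum_const, Finset.card_range]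
        simp [nsmul_eq_mul]
      rw [hmid] at key
      have e0 : M+1-0 = M+1 := by omega
      have e1 : M+1-(M+1) = 0 := by omega
      rw [e0, e1, sS_zero] at key
      push_cast at key
      linarith



noncomputable def Zs (N r : ℕ) : ℚ :=
  ∑ j ∈ range (N+1), (-1:ℚ)^j * ch (j+r) (N-j) * ch (2*j+r) j

lemma Ysplit (N r : ℕ) :
    ∑ i ∈ range (N+2), (-1:ℚ)^i * ch (i+r+1) (N+1-i) * ch (2*i+r) i
      = Zs (N+1) r + Zs N r := by
  have hsplit : ∀ i ∈ range (N+1), (-1:ℚ)^i * ch (i+r+1) (N+1-i) * ch (2*i+r) i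
      = (-1:ℚ)^i * ch (i+r) (N+1-i) * ch (2*i+r) i
        + (-1:ℚ)^i * ch (i+r) (N-i) * ch (2*i+r) i := by
    intro i hi
    have hi' : i ≤ N := by simpa [Nat.lt_succ_iff] using hi
    have e : N+1-i = (N-i)+1 := by omega
    rw [e, ch_succ_succ, ← e]
    ring
  rw [Finset.sum_range_succ, Finset.sum_congr rfl hsplit, Finset.sum_add_distrib]
  have hZ : Zs (N+1) r = (∑ i ∈ range (N+1), (-1:ℚ)^i * ch (i+r) (N+1-i) * ch (2*i+r) i)
      + (-1:ℚ)^(N+1) * ch (2*(N+1)+r) (N+1) := by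
    rw [Zs, Finset.sum_range_succ]
    have e : N+1-(N+1) = 0 := by omega
    rw [e, ch_zero]
    ring
  have hT : (-1:ℚ)^(N+1) * ch (N+1+r+1) (N+1-(N+1)) * ch (2*(N+1)+r) (N+1)
      = (-1:ℚ)^(N+1) * ch (2*(N+1)+r) (N+1) := by
    have e : N+1-(N+1) = 0 := by omega
    rw [e, ch_zero]
    ring
  rw [hT, hZ, Zs]
  ring

lemma Zval : ∀ N r : ℕ, Zs N r = (-2:ℚ)^N := by
  intro N
  induction N with
  | zero =>
    intro r
    simp [Zs, ch]
  | succ N ihN =>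
    intro r
    induction r with
    | zero =>
      have : Zs (N+1) 0 = sS (N+1) := by
        rw [Zs, sS]
        apply Finset.sum_congr rfl
        intro j _
        simp only [Nat.add_zero, Nat.mul_comm]
        ring
      rw [this, ssum]
    | succ r ihr =>
      rw [Zs, Finset.sum_range_succ']
      have hsplit : ∀ j ∈ range (N+1),
          (-1:ℚ)^(j+1) * ch (j+1+(r+1)) (N+1-(j+1)) * ch (2*(j+1)+(r+1)) (j+1)
          = -((-1:ℚ)^j * ch (j+(r+2)) (N-j) * ch (2*j+(r+2)) j)
            + (-1:ℚ)^(j+1) * ch (j+1+r+1) (N+1-(j+1)) * ch (2*(j+1)+r) (j+1) := by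
        intro j _
        have e1 : 2*(j+1)+(r+1) = (2*j+(r+2))+1 := by omega
        have e2 : j+1+(r+1) = j+(r+2) := by omega
        have e3 : N+1-(j+1) = N-j := by omega
        have e4 : j+1+r+1 = j+(r+2) := by omega
        have e5 : 2*(j+1)+r = 2*j+(r+2) := by omega
        rw [e1, ch_succ_succ, e2, e3, e4, e5]
        ring
      rw [Finset.sum_congr rfl hsplit, Finset.sum_add_distrib]
      have hA : ∑ j ∈ range (N+1), -((-1:ℚ)^j * ch (j+(r+2)) (N-j) * ch (2*j+(r+2)) j)
          = -(-2:ℚ)^N := by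
        rw [← ihN (r+2), Zs, ← Finset.sum_neg_distrib]
      have hB : (∑ j ∈ range (N+1), (-1:ℚ)^(j+1) * ch (j+1+r+1) (N+1-(j+1)) * ch (2*(j+1)+r) (j+1))
            + (-1:ℚ)^0 * ch (0+(r+1)) (N+1-0) * ch (2*0+(r+1)) 0
          = Zs (N+1) r + Zs N r := by
        rw [← Ysplit N r]
        rw [Finset.sum_range_succ'
          (fun i => (-1:ℚ)^i * ch (i+r+1) (N+1-i) * ch (2*i+r) i) (N+1)]
        congr 1
        have e : (2*0+(r+1)) = r+1 := by omega
        have e' : (2*0+r) = r := by omega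
        rw [e, e', ch_zero, ch_zero]
      rw [add_assoc, hB, hA, ihr, ihN r]
      ring

lemma L5 (N r : ℕ) :
    ∑ j ∈ range (N+1), (-1:ℚ)^j * (ch (j+r+1) (N+1-j) + ch (j+r) (N-j)) * ch (2*j+r) j
      = (-1:ℚ)^N * ch (2*(N+1)+r) (N+1) := by
  have hsplit : ∀ j ∈ range (N+1),
      (-1:ℚ)^j * (ch (j+r+1) (N+1-j) + ch (j+r) (N-j)) * ch (2*j+r) j
      = (-1:ℚ)^j * ch (j+r+1) (N+1-j) * ch (2*j+r) j
        + (-1:ℚ)^j * ch (j+r) (N-j) * ch (2*j+r) j := by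
    intro j _; ring
  rw [Finset.sum_congr rfl hsplit, Finset.sum_add_distrib]
  have hS2 : ∑ j ∈ range (N+1), (-1:ℚ)^j * ch (j+r) (N-j) * ch (2*j+r) j = (-2:ℚ)^N :=
    Zval N r
  have hS1 : ∑ j ∈ range (N+1), (-1:ℚ)^j * ch (j+r+1) (N+1-j) * ch (2*j+r) j
      = Zs (N+1) r + Zs N r - (-1:ℚ)^(N+1) * ch (2*(N+1)+r) (N+1) := by
    have h := Ysplit N r
    rw [Finset.sum_range_succ] at h
    have e : N+1-(N+1) = 0 := by omega
    rw [e] at h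
    have e2 : ch (N+1+r+1) 0 = 1 := ch_zero _
    rw [e2] at h
    linarith [h]
  rw [hS1, hS2, Zval (N+1) r, Zval N r]
  ring


def ent (k i j : ℕ) : ℚ :=
  if j ≤ i + 1 then ((i + k + 1 : ℕ) : ℚ) / ((j + k : ℕ) : ℚ) * (Nat.choose (j+k) (i+1-j) : ℚ)
  else 0

def Amat (k n : ℕ) : Matrix (Fin n) (Fin n) ℚ := Matrix.of fun i j => ent k i (j : ℕ)

def Bmat (k t m : ℕ) : Matrix (Fin m) (Fin m) ℚ :=
  Matrix.of fun i j => if (i : ℕ) = m - 1 then ent k t (j : ℕ) else ent k i (j : ℕ)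

lemma ent_zero (k i j : ℕ) (h : i + 1 < j) : ent k i j = 0 := if_neg (by omega)

lemma ent_superdiag (k i : ℕ) : ent k i (i+1) = 1 := by
  rw [ent, if_pos (le_refl _)]
  have e : i+1-(i+1) = 0 := by omega
  have e2 : i+1+k = i+k+1 := by omega
  rw [e, e2, Nat.choose_zero_right]
  have : ((i+k+1 : ℕ) : ℚ) ≠ 0 := by positivity
  field_simp
  norm_num

lemma ent_eq (r N' j : ℕ) (hj : j ≤ N') :
    ent (r+1) N' j = ch (j+r+1) (N'+1-j) + ch (j+r) (N'-j) := by
  rw [ent, if_pos (by omega)]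
  have hd : ((j+(r+1) : ℕ) : ℚ) ≠ 0 := by positivity
  rw [div_mul_eq_mul_div, div_eq_iff hd]
  have key : (j+r+1) * Nat.choose (j+r) (N'-j) = Nat.choose (j+r+1) (N'+1-j) * (N'+1-j) := by
    have h := Nat.add_one_mul_choose_eq (j+r) (N'-j)
    have e : (N'-j)+1 = N'+1-j := by omega
    rw [← e]
    exact_mod_cast h
  have keyq : ((j+r+1 : ℕ) : ℚ) * (Nat.choose (j+r) (N'-j) : ℚ)
      = (Nat.choose (j+r+1) (N'+1-j) : ℚ) * ((N'+1-j : ℕ) : ℚ) := by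
    exact_mod_cast congrArg (fun x : ℕ => (x : ℚ)) key
  have ecast : ((N'+(r+1)+1 : ℕ) : ℚ) = ((j+r+1 : ℕ) : ℚ) + ((N'+1-j : ℕ) : ℚ) := by
    have e : N'+(r+1)+1 = (j+r+1) + (N'+1-j) := by omega
    rw [e]
    push_cast [Nat.cast_add]
    ring
  rw [ecast, ch, ch]
  have ej : (j+(r+1)) = (j+r+1) := by omega
  rw [ej]
  push_cast at keyq ⊢
  linear_combination (-1 : ℚ) * keyq

lemma Bmat_eq (k N' : ℕ) : Bmat k N' (N'+1) = Amat k (N'+1) := by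
  ext i j
  simp only [Bmat, Amat, Matrix.of_apply]
  by_cases h : (i : ℕ) = (N'+1) - 1
  · rw [if_pos h]
    have : (i : ℕ) = N' := by omega
    rw [this]
  · rw [if_neg h]

lemma det_Bmat_one (k t : ℕ) : (Bmat k t 1).det = ent k t 0 := by
  rw [Matrix.det_fin_one]
  simp [Bmat]

lemma det_Bmat_succ (k t p : ℕ) :
    (Bmat k t (p+2)).det = ent k t (p+1) * (Amat k (p+1)).det - (Bmat k t (p+1)).det := by
  rw [Matrix.det_succ_column (Bmat k t (p+2)) (Fin.last (p+1))]
  set f : Fin (p+2) → ℚ := fun i =>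
    (-1)^((i : ℕ) + ((Fin.last (p+1) : Fin (p+2)) : ℕ)) * Bmat k t (p+2) i (Fin.last (p+1))
      * ((Bmat k t (p+2)).submatrix i.succAbove (Fin.last (p+1)).succAbove).det with hf
  have i0 : Fin (p+2) := ⟨p, by omega⟩
  have hsub : ∑ i : Fin (p+2), f i = ∑ i ∈ ({⟨p, by omega⟩, Fin.last (p+1)} : Finset (Fin (p+2))), f i := by
    refine (Finset.sum_subset (Finset.subset_univ _) ?_).symm
    intro x _ hx
    simp only [Finset.mem_insert, Finset.mem_singleton] at hx
    push_neg at hx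
    obtain ⟨hx1, hx2⟩ := hx
    have hv1 : (x : ℕ) ≠ p := fun h => hx1 (Fin.ext h)
    have hv2 : (x : ℕ) ≠ p+1 := fun h => hx2 (Fin.ext h)
    have hxlt : (x : ℕ) < p := by have := x.isLt; omega
    rw [hf]
    simp only
    have hentry : Bmat k t (p+2) x (Fin.last (p+1)) = 0 := by
      simp only [Bmat, Matrix.of_apply, Fin.val_last]
      rw [if_neg (by omega)]
      exact ent_zero _ _ _ (by omega)
    rw [hentry]
    ring
  rw [hsub, Finset.sum_insert (by
    simp only [Finset.mem_singleton]
    intro h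
    have : p = p+1 := congrArg Fin.val h
    omega), Finset.sum_singleton]
  have hterm1 : f (Fin.last (p+1)) = ent k t (p+1) * (Amat k (p+1)).det := by
    rw [hf]
    simp only [Fin.val_last]
    have hsign : (-1:ℚ)^((p+1)+(p+1)) = 1 := Even.neg_one_pow ⟨p+1, by ring⟩
    have hentry : Bmat k t (p+2) (Fin.last (p+1)) (Fin.last (p+1)) = ent k t (p+1) := by
      simp only [Bmat, Matrix.of_apply, Fin.val_last]
      rw [if_pos (by omega)]
    have hminor : ((Bmat k t (p+2)).submatrix (Fin.last (p+1)).succAbove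
        (Fin.last (p+1)).succAbove) = Amat k (p+1) := by
      ext i j
      simp only [Matrix.submatrix_apply, Fin.succAbove_last, Bmat, Amat, Matrix.of_apply,
        Fin.coe_castSucc]
      rw [if_neg (by have := i.isLt; omega)]
    rw [hsign, hentry, hminor]
    ring
  have hterm0 : f ⟨p, by omega⟩ = - (Bmat k t (p+1)).det := by
    rw [hf]
    simp only [Fin.val_last]
    have hsign : (-1:ℚ)^(p+(p+1)) = -1 := Odd.neg_one_pow ⟨p, by ring⟩
    have hentry : Bmat k t (p+2) ⟨p, by omega⟩ (Fin.last (p+1)) = 1 := by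
      simp only [Bmat, Matrix.of_apply, Fin.val_last]
      rw [if_neg (by omega)]
      exact ent_superdiag k p
    have hminor : ((Bmat k t (p+2)).submatrix (⟨p, by omega⟩ : Fin (p+2)).succAbove
        (Fin.last (p+1)).succAbove) = Bmat k t (p+1) := by
      ext i j
      simp only [Matrix.submatrix_apply, Fin.succAbove_last, Bmat, Matrix.of_apply,
        Fin.coe_castSucc]
      have hrow : (((⟨p, by omega⟩ : Fin (p+2)).succAbove i : Fin (p+2)) : ℕ)
          = if (i : ℕ) < p then (i : ℕ) else (i : ℕ)+1 := by
        simp only [Fin.succAbove, Fin.lt_def, Fin.coe_castSucc]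
        split_ifs with h
        · rfl
        · simp [Fin.val_succ]
      rw [hrow]
      by_cases h : (i : ℕ) < p
      · rw [if_pos h, if_neg (by omega), if_neg (by have := i.isLt; omega)]
      · have : (i : ℕ) = p := by have := i.isLt; omega
        rw [if_neg h, if_pos (by omega), if_pos (by omega)]
    rw [hsign, hentry, hminor]
    ring
  rw [hterm0, hterm1]
  ring

lemma detA (r : ℕ) : ∀ N : ℕ, (Amat (r+1) N).det = ch (2*N+r) N := by
  intro N
  induction N using Nat.strong_induction_on with
  | _ N ih =>
    match N with
    | 0 =>
      have : (Amat (r+1) 0).det = 1 := Matrix.det_fin_zero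
      rw [this, ch]
      simp
    | (N'+1) =>
      have hF : ∀ m : ℕ, m ≤ N' → (Bmat (r+1) N' (m+1)).det
          = (-1:ℚ)^m * ∑ j ∈ range (m+1), (-1:ℚ)^j * ent (r+1) N' j * ch (2*j+r) j := by
        intro m
        induction m with
        | zero =>
          intro _
          rw [det_Bmat_one]
          simp [ch]
        | succ m ihm =>
          intro hm
          rw [det_Bmat_succ, ih (m+1) (by omega), ihm (by omega),
            Finset.sum_range_succ (fun j => (-1:ℚ)^j * ent (r+1) N' j * ch (2*j+r) j) (m+1)]
          have h1 : ((-1:ℚ)^m)*((-1:ℚ)^m) = 1 := by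
            rw [← pow_add]
            exact Even.neg_one_pow ⟨m, by ring⟩
          linear_combination (-(ent (r+1) N' (m+1) * ch (2*(m+1)+r) (m+1))) * h1
      have hmain := hF N' (le_refl N')
      have hAB : (Amat (r+1) (N'+1)).det = (Bmat (r+1) N' (N'+1)).det := by
        rw [Bmat_eq]
      rw [hAB, hmain]
      have hent : ∀ j ∈ range (N'+1), (-1:ℚ)^j * ent (r+1) N' j * ch (2*j+r) j
          = (-1:ℚ)^j * (ch (j+r+1) (N'+1-j) + ch (j+r) (N'-j)) * ch (2*j+r) j := by
        intro j hj
        have hj' : j ≤ N' := by simpa [Nat.lt_succ_iff] using hj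
        rw [ent_eq r N' j hj']
      rw [Finset.sum_congr rfl hent, L5 N' r]
      have : (-1:ℚ)^N' * ((-1:ℚ)^N' * ch (2*(N'+1)+r) (N'+1)) = ch (2*(N'+1)+r) (N'+1) := by
        rw [← mul_assoc, ← pow_add]
        rw [Even.neg_one_pow ⟨N', by ring⟩, one_mul]
      rw [this]

theorem stmt_9 (n k : ℕ) (hk : 1 ≤ k) :
    Matrix.det (Matrix.of fun i j : Fin n =>
        if (j : ℕ) ≤ (i : ℕ) + 1 then
          ((((i : ℕ) + k + 1 : ℕ) : ℚ) / (((j : ℕ) + k : ℕ) : ℚ)) *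
            (Nat.choose ((j : ℕ) + k) ((i : ℕ) + 1 - (j : ℕ)) : ℚ)
        else 0)
      = (Nat.choose (2 * n + k - 1) n : ℚ) := by
  obtain ⟨r, rfl⟩ := Nat.exists_eq_add_of_le hk
  rw [Nat.add_comm 1 r]
  have hM : (Matrix.of fun i j : Fin n =>
      if (j : ℕ) ≤ (i : ℕ) + 1 then
        ((((i : ℕ) + (r+1) + 1 : ℕ) : ℚ) / (((j : ℕ) + (r+1) : ℕ) : ℚ)) *
          (Nat.choose ((j : ℕ) + (r+1)) ((i : ℕ) + 1 - (j : ℕ)) : ℚ)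
      else 0) = Amat (r+1) n := by
    ext i j
    simp only [Matrix.of_apply, Amat, ent]
  rw [hM]
  have e : 2 * n + (r+1) - 1 = 2*n+r := by omega
  rw [e]
  exact detA r n
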